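/- Let f and g be polynomials over ℝ with non-negative coefficients, and suppose f is a monotone simple projection of g (each variable of g is substituted by a variable of f or a non-negative constant). Then the Newton polytope of f is the image under a linear map of a face of the Newton polytope of g; in particular, the extension complexity of New(f) is at most the number of facets of New(g). -/

import Mathlib

open MvPolynomial

/-- The Newton polytope of a polynomial: the convex hull of its exponent vectors. -/
noncomputable def newton {σ : Type*} (f : MvPolynomial σ ℝ) : Set (σ → ℝ) :=
  convexHull ℝ ((fun d : σ →₀ ℕ => fun i => (d i : ℝ)) '' (f.support : Set (σ →₀ ℕ)))

/-- A face of a polytope `P`: the set of minimizers over `P` of a linear functional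
(together with the empty set). -/
def IsFace {E : Type*} [AddCommGroup E] [Module ℝ E] (P F : Set E) : Prop :=
  F = ∅ ∨ ∃ φ : E →ₗ[ℝ] ℝ, F = {x ∈ P | ∀ y ∈ P, φ x ≤ φ y}

def IsPolytope {E : Type*} [AddCommGroup E] [Module ℝ E] (P : Set E) : Prop :=
  ∃ S : Finset E, P = convexHull ℝ (S : Set E)

/-- `P` can be described by at most `k` linear inequalities, together with
arbitrarily many linear equalities (an affine subspace); in particular if this holds
then `P` has at most `k` facets. -/
def DescribedByIneqs {E : Type*} [AddCommGroup E] [Module ℝ E] (P : Set E) (k : ℕ) : Prop :=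
  ∃ (S : AffineSubspace ℝ E) (a : Fin k → E →ₗ[ℝ] ℝ) (b : Fin k → ℝ),
    P = {x | x ∈ S ∧ ∀ i, a i x ≤ b i}

/-- `P` has extension complexity at most `k`: some polytope `Q` with at most `k` facets
maps onto `P` under an affine map. -/
def ExtComplexityLE {E : Type*} [AddCommGroup E] [Module ℝ E] (P : Set E) (k : ℕ) : Prop :=
  ∃ (m : ℕ) (Q : Set (Fin m → ℝ)), IsPolytope Q ∧ DescribedByIneqs Q k ∧
    ∃ ℓ : (Fin m → ℝ) →ᵃ[ℝ] E, ℓ '' Q = P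

/-- `f` is a monotone simple projection of `g`: each variable of `g` is substituted
by a variable of `f` or a non-negative constant. -/
def MonotoneSimpleProjection {σ τ : Type*} (f : MvPolynomial σ ℝ) (g : MvPolynomial τ ℝ) :
    Prop :=
  ∃ π : τ → MvPolynomial σ ℝ,
    (∀ i, (∃ j, π i = X j) ∨ ∃ c : ℝ, 0 ≤ c ∧ π i = MvPolynomial.C c) ∧
    f = aeval π g

/- ---------- auxiliary material ---------- -/

lemma prod_monomial_eq {σ R : Type*} [CommSemiring R] {ι : Type*} (s : Finset ι)
    (e : ι → (σ →₀ ℕ)) (a : ι → R) :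
    ∏ i ∈ s, MvPolynomial.monomial (e i) (a i) =
      MvPolynomial.monomial (∑ i ∈ s, e i) (∏ i ∈ s, a i) := by
  classical
  induction s using Finset.induction with
  | empty => simp [MvPolynomial.monomial_zero']
  | insert _ _ h ih =>
      rw [Finset.prod_insert h, ih, Finset.sum_insert h, Finset.prod_insert h,
        MvPolynomial.monomial_mul]

/-- The face of a polytope given by minimizing a linear functional which is nonnegative on the
vertex set and attains the value `0` there. -/
lemma face_hull {E : Type*} [AddCommGroup E] [Module ℝ E] (t : Finset E) (φ : E →ₗ[ℝ] ℝ)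
    (hφ : ∀ y ∈ t, 0 ≤ φ y) (hex : ∃ y₀ ∈ t, φ y₀ = 0) :
    convexHull ℝ {y ∈ (t : Set E) | φ y = 0} =
      {x ∈ convexHull ℝ (t : Set E) | ∀ y ∈ convexHull ℝ (t : Set E), φ x ≤ φ y} := by
  classical
  obtain ⟨y₀, hy₀t, hy₀⟩ := hex
  have hnn : ∀ x ∈ convexHull ℝ (t : Set E), 0 ≤ φ x := fun x hx =>
    convexHull_min (fun y hy => hφ y hy) (convex_halfSpace_ge φ.isLinear 0) hx
  apply Set.Subset.antisymm
  · intro x hx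
    have hx1 : x ∈ convexHull ℝ (t : Set E) :=
      convexHull_mono (Set.sep_subset _ _) hx
    have hx0 : x ∈ {z | φ z ≤ 0} :=
      convexHull_min (fun y hy => le_of_eq hy.2) (convex_halfSpace_le φ.isLinear 0) hx
    exact ⟨hx1, fun y hy => hx0.trans (hnn y hy)⟩
  · rintro x ⟨hx, hmin⟩
    have hx0 : φ x = 0 :=
      le_antisymm (hy₀ ▸ hmin y₀ (subset_convexHull ℝ _ hy₀t)) (hnn x hx)
    rw [Finset.convexHull_eq] at hx
    obtain ⟨w, hw0, hw1, hwx⟩ := hx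
    rw [Finset.centerMass_eq_of_sum_1 _ _ hw1] at hwx
    have hterm : ∀ y ∈ t, w y * φ y = 0 := by
      rw [← Finset.sum_eq_zero_iff_of_nonneg
        (fun y hy => mul_nonneg (hw0 y hy) (hφ y hy))]
      calc ∑ y ∈ t, w y * φ y = φ x := by
            rw [← hwx, map_sum]; exact Finset.sum_congr rfl fun y _ => by
              simp [map_smul, smul_eq_mul]
        _ = 0 := hx0
    set t₀ : Finset E := t.filter (fun y => φ y = 0) with ht₀
    have hwz : ∀ y ∈ t, y ∉ t₀ → w y = 0 := by
      intro y hyt hyn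
      have hφy : φ y ≠ 0 := by
        intro h; exact hyn (Finset.mem_filter.mpr ⟨hyt, h⟩)
      rcases mul_eq_zero.mp (hterm y hyt) with h | h
      · exact h
      · exact absurd h hφy
    have hsum0 : ∑ y ∈ t₀, w y = 1 := by
      rw [← hw1]
      exact (Finset.sum_subset (Finset.filter_subset _ _)
        (fun y hy hyn => hwz y hy hyn)).symm ▸ rfl
    have hxsum : ∑ y ∈ t₀, w y • (id y) = x := by
      rw [← hwx]
      apply Finset.sum_subset (Finset.filter_subset _ _)
      intro y hy hyn
      rw [hwz y hy hyn, zero_smul]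
    have hmem : t₀.centerMass w id ∈ convexHull ℝ (t₀ : Set E) :=
      t₀.centerMass_mem_convexHull (fun y hy => hw0 y (Finset.filter_subset _ _ hy))
        (by rw [hsum0]; norm_num) (fun y hy => Finset.mem_coe.mpr hy)
    rw [Finset.centerMass_eq_of_sum_1 _ _ hsum0, hxsum] at hmem
    have : (t₀ : Set E) = {y ∈ (t : Set E) | φ y = 0} := by
      ext y; simp [ht₀]
    rwa [this] at hmem

noncomputable def selM {n m : ℕ} (sel : Fin m → Fin n ⊕ ℝ) (d : Fin m →₀ ℕ) : Fin n →₀ ℕ :=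
  ∑ i : Fin m, Sum.elim (fun j => Finsupp.single j (d i)) (fun _ => (0 : Fin n →₀ ℕ)) (sel i)

noncomputable def selC {n m : ℕ} (sel : Fin m → Fin n ⊕ ℝ) (d : Fin m →₀ ℕ) : ℝ :=
  ∏ i : Fin m, Sum.elim (fun _ => (1 : ℝ)) (fun r => r ^ d i) (sel i)

lemma selC_nonneg {n m : ℕ} {π : Fin m → MvPolynomial (Fin n) ℝ} {sel : Fin m → Fin n ⊕ ℝ}
    (hsel : ∀ i, Sum.elim (fun j => π i = X j) (fun c => 0 ≤ c ∧ π i = MvPolynomial.C c) (sel i))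
    (d : Fin m →₀ ℕ) : 0 ≤ selC sel d := by
  apply Finset.prod_nonneg
  intro i _
  have h := hsel i
  cases hs : sel i with
  | inl j => simp
  | inr r =>
      rw [hs] at h
      simp only [Sum.elim_inr]
      exact pow_nonneg h.1 _

lemma selC_ne_zero_iff {n m : ℕ} (sel : Fin m → Fin n ⊕ ℝ) (d : Fin m →₀ ℕ) :
    selC sel d ≠ 0 ↔ ∀ i, sel i = Sum.inr 0 → d i = 0 := by
  classical
  rw [selC, Ne, Finset.prod_eq_zero_iff]
  constructor
  · intro h i hi
    by_contra hd
    exact h ⟨i, Finset.mem_univ i, by simp [hi, zero_pow hd]⟩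
  · rintro h ⟨i, -, hi⟩
    cases hs : sel i with
    | inl j => rw [hs] at hi; simp at hi
    | inr r =>
        rw [hs] at hi
        simp only [Sum.elim_inr] at hi
        obtain ⟨hr, hd⟩ := pow_eq_zero_iff'.mp hi
        exact hd (h i (by rw [hs, hr]))

lemma aeval_eq_sum_monomial {n m : ℕ} (π : Fin m → MvPolynomial (Fin n) ℝ)
    (sel : Fin m → Fin n ⊕ ℝ)
    (hsel : ∀ i, Sum.elim (fun j => π i = X j) (fun c => 0 ≤ c ∧ π i = MvPolynomial.C c) (sel i))
    (g : MvPolynomial (Fin m) ℝ) :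
    aeval π g = ∑ d ∈ g.support, monomial (selM sel d) (g.coeff d * selC sel d) := by
  rw [aeval_def, eval₂_eq']
  refine Finset.sum_congr rfl fun d _ => ?_
  have hprod : ∏ i, π i ^ d i = monomial (selM sel d) (selC sel d) := by
    rw [selM, selC, ← prod_monomial_eq]
    refine Finset.prod_congr rfl fun i _ => ?_
    have h := hsel i
    cases hs : sel i with
    | inl j =>
        rw [hs] at h
        simp only [Sum.elim_inl] at h ⊢
        rw [h, X_pow_eq_monomial]
    | inr r =>
        rw [hs] at h
        simp only [Sum.elim_inr] at h ⊢
        rw [h.2, ← C_pow, C_apply]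
  rw [hprod, algebraMap_eq, C_mul_monomial]

lemma support_aeval_eq {n m : ℕ} (π : Fin m → MvPolynomial (Fin n) ℝ)
    (sel : Fin m → Fin n ⊕ ℝ)
    (hsel : ∀ i, Sum.elim (fun j => π i = X j) (fun c => 0 ≤ c ∧ π i = MvPolynomial.C c) (sel i))
    (g : MvPolynomial (Fin m) ℝ) (hg : ∀ d, 0 ≤ g.coeff d) :
    (aeval π g).support =
      (g.support.filter (fun d => selC sel d ≠ 0)).image (selM sel) := by
  classical
  ext e
  rw [mem_support_iff, aeval_eq_sum_monomial π sel hsel g]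
  rw [coeff_sum]
  simp only [coeff_monomial]
  constructor
  · intro h
    obtain ⟨d, hd, hne⟩ := Finset.exists_ne_zero_of_sum_ne_zero h
    rw [Finset.mem_image]
    refine ⟨d, Finset.mem_filter.mpr ⟨hd, ?_⟩, ?_⟩
    · intro hc; apply hne; split <;> simp [hc]
    · by_contra hMe
      exact hne (if_neg hMe)
  · intro h
    rw [Finset.mem_image] at h
    obtain ⟨d, hd, hde⟩ := h
    rw [Finset.mem_filter] at hd
    obtain ⟨hdg, hcd⟩ := hd
    have hpos : 0 < ∑ x ∈ g.support, if selM sel x = e then g.coeff x * selC sel x else 0 := by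
      apply Finset.sum_pos'
      · intro x _
        split
        · exact mul_nonneg (hg x) (selC_nonneg hsel x)
        · exact le_refl 0
      · refine ⟨d, hdg, ?_⟩
        rw [if_pos hde]
        apply mul_pos
        · exact lt_of_le_of_ne (hg d) (Ne.symm (mem_support_iff.mp hdg))
        · exact lt_of_le_of_ne (selC_nonneg hsel d) (Ne.symm hcd)
    exact ne_of_gt hpos

/-- Main Lemma: if `f`, `g` have non-negative coefficients and `f` is a monotone simple
projection of `g`, then the Newton polytope of `f` is the image under a linear map of a
face of the Newton polytope of `g`; in particular `xc(New(f)) ≤ c(New(g))`. -/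
theorem newton_face_extension_of_monotone_projection {n m : ℕ}
    (f : MvPolynomial (Fin n) ℝ) (g : MvPolynomial (Fin m) ℝ)
    (hf : ∀ d, 0 ≤ f.coeff d) (hg : ∀ d, 0 ≤ g.coeff d)
    (hproj : MonotoneSimpleProjection f g) :
    (∃ F : Set (Fin m → ℝ), IsFace (newton g) F ∧
      ∃ ℓ : (Fin m → ℝ) →ₗ[ℝ] (Fin n → ℝ), ℓ '' F = newton f) ∧
    (∀ k, DescribedByIneqs (newton g) k → ExtComplexityLE (newton f) k) := by
  classical
  obtain ⟨π, hπ, hfg⟩ := hproj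
  have hsel' : ∀ i : Fin m, ∃ s : Fin n ⊕ ℝ,
      Sum.elim (fun j => π i = X j) (fun c => 0 ≤ c ∧ π i = MvPolynomial.C c) s := by
    intro i
    rcases hπ i with ⟨j, hj⟩ | ⟨c, hc0, hc⟩
    · exact ⟨Sum.inl j, hj⟩
    · exact ⟨Sum.inr c, hc0, hc⟩
  choose sel hsel using hsel'
  have hsupp : f.support = (g.support.filter (fun d => selC sel d ≠ 0)).image (selM sel) := by
    rw [hfg]; exact support_aeval_eq π sel hsel g hg
  by_cases hf0 : f = 0
  · have hnf : newton f = ∅ := by simp [newton, hf0]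
    constructor
    · exact ⟨∅, Or.inl rfl, 0, by simp [hnf]⟩
    · intro k _
      refine ⟨0, ∅, ⟨∅, by simp⟩, ⟨⊥, fun _ => 0, fun _ => 0, ?_⟩,
        AffineMap.const ℝ _ 0, by simp [hnf]⟩
      ext x
      simp [AffineSubspace.notMem_bot]
  · -- nonempty case
    have hfs : f.support.Nonempty := support_nonempty.mpr hf0
    have hd₀' : ∃ d₀ ∈ g.support, selC sel d₀ ≠ 0 := by
      obtain ⟨e₀, he₀⟩ := hfs
      rw [hsupp, Finset.mem_image] at he₀
      obtain ⟨d₀, hd₀, -⟩ := he₀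
      rw [Finset.mem_filter] at hd₀
      exact ⟨d₀, hd₀.1, hd₀.2⟩
    obtain ⟨d₀, hd₀g, hd₀c⟩ := hd₀'
    set vecm : (Fin m →₀ ℕ) → (Fin m → ℝ) := fun d i => (d i : ℝ) with hvecm
    set Z : Finset (Fin m) := Finset.univ.filter (fun i => sel i = Sum.inr 0) with hZ
    set φ : (Fin m → ℝ) →ₗ[ℝ] ℝ := ∑ i ∈ Z, LinearMap.proj i with hφ
    have hφapp : ∀ x : Fin m → ℝ, φ x = ∑ i ∈ Z, x i := by
      intro x; rw [hφ]; simp [LinearMap.sum_apply, LinearMap.proj_apply]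
    have hφ0 : ∀ d : Fin m →₀ ℕ, (φ (vecm d) = 0 ↔ selC sel d ≠ 0) := by
      intro d
      rw [hφapp, selC_ne_zero_iff,
        Finset.sum_eq_zero_iff_of_nonneg (fun i _ => by
          simp only [hvecm]; exact Nat.cast_nonneg _)]
      constructor
      · intro h i hi
        have := h i (Finset.mem_filter.mpr ⟨Finset.mem_univ i, hi⟩)
        simpa [hvecm] using this
      · intro h i hi
        rw [hZ, Finset.mem_filter] at hi
        simp [hvecm, h i hi.2]
    set ℓ : (Fin m → ℝ) →ₗ[ℝ] (Fin n → ℝ) :=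
      LinearMap.pi (fun j =>
        ∑ i ∈ Finset.univ.filter (fun i => sel i = Sum.inl j), LinearMap.proj i) with hℓ
    have hℓvec : ∀ d : Fin m →₀ ℕ,
        ℓ (vecm d) = (fun e : Fin n →₀ ℕ => fun j => (e j : ℝ)) (selM sel d) := by
      intro d
      funext j
      rw [hℓ]
      simp only [LinearMap.pi_apply, LinearMap.sum_apply, LinearMap.proj_apply]
      have hnat : ((selM sel d) j : ℝ) = ∑ i : Fin m,
          ((Sum.elim (fun j' => Finsupp.single j' (d i))
            (fun _ => (0 : Fin n →₀ ℕ)) (sel i)) j : ℝ) := by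
        rw [selM, Finsupp.finset_sum_apply]
        push_cast
        rfl
      show _ = ((selM sel d) j : ℝ)
      rw [hnat, Finset.sum_filter]
      refine Finset.sum_congr rfl fun i _ => ?_
      cases hs : sel i with
      | inl j' =>
          by_cases hj : j' = j <;>
            simp [hs, hj, Finsupp.single_apply, hvecm]
      | inr r => simp [hs]
    set t : Finset (Fin m → ℝ) := g.support.image vecm with ht
    have hNg : newton g = convexHull ℝ (t : Set (Fin m → ℝ)) := by
      simp only [newton, ht, Finset.coe_image, hvecm]
    have hφt : ∀ y ∈ t, 0 ≤ φ y := by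
      intro y hy
      rw [ht, Finset.mem_image] at hy
      obtain ⟨d, -, rfl⟩ := hy
      rw [hφapp]
      exact Finset.sum_nonneg fun i _ => by
        simp only [hvecm]; exact Nat.cast_nonneg _
    have hex : ∃ y₀ ∈ t, φ y₀ = 0 :=
      ⟨vecm d₀, Finset.mem_image_of_mem _ hd₀g, (hφ0 d₀).mpr hd₀c⟩
    have hface := face_hull t φ hφt hex
    set F : Set (Fin m → ℝ) := convexHull ℝ {y ∈ (t : Set (Fin m → ℝ)) | φ y = 0} with hF
    have hS₀ : {y ∈ (t : Set (Fin m → ℝ)) | φ y = 0}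
        = vecm '' ↑(g.support.filter fun d => selC sel d ≠ 0) := by
      ext y
      constructor
      · rintro ⟨hyt, hy0⟩
        rw [Finset.mem_coe, ht, Finset.mem_image] at hyt
        obtain ⟨d, hdg, rfl⟩ := hyt
        exact ⟨d, Finset.mem_coe.mpr (Finset.mem_filter.mpr ⟨hdg, (hφ0 d).mp hy0⟩), rfl⟩
      · rintro ⟨d, hd, rfl⟩
        rw [Finset.mem_coe, Finset.mem_filter] at hd
        exact ⟨Finset.mem_coe.mpr (Finset.mem_image_of_mem _ hd.1), (hφ0 d).mpr hd.2⟩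
    have himage : ℓ '' F = newton f := by
      rw [hF, ℓ.image_convexHull, hS₀, ← Set.image_comp]
      simp only [newton, hsupp, Finset.coe_image, ← Set.image_comp]
      congr 1
      exact Set.image_congr fun d _ => hℓvec d
    have hy₀mem : vecm d₀ ∈ convexHull ℝ (t : Set (Fin m → ℝ)) :=
      subset_convexHull ℝ _ (Finset.mem_coe.mpr (Finset.mem_image_of_mem _ hd₀g))
    have hnnt : ∀ x ∈ convexHull ℝ (t : Set (Fin m → ℝ)), 0 ≤ φ x := fun x hx =>
      convexHull_min (fun y hy => hφt y hy) (convex_halfSpace_ge φ.isLinear 0) hx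
    have hFeq : F = {x ∈ convexHull ℝ (t : Set (Fin m → ℝ)) | φ x = 0} := by
      rw [hface]
      ext x
      constructor
      · rintro ⟨hx, hmin⟩
        have h1 := hmin _ hy₀mem
        rw [(hφ0 d₀).mpr hd₀c] at h1
        exact ⟨hx, le_antisymm h1 (hnnt x hx)⟩
      · rintro ⟨hx, hx0⟩
        exact ⟨hx, fun y hy => by rw [hx0]; exact hnnt y hy⟩
    constructor
    · exact ⟨F, Or.inr ⟨φ, by rw [hNg, hF]; exact hface⟩, ℓ, himage⟩
    · intro k hdesc
      obtain ⟨S, a, b, hSab⟩ := hdesc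
      refine ⟨m, F, ⟨(g.support.filter fun d => selC sel d ≠ 0).image vecm, ?_⟩,
        ⟨S ⊓ (LinearMap.ker φ).toAffineSubspace, a, b, ?_⟩, ℓ.toAffineMap, ?_⟩
      · rw [hF]
        exact congrArg _ (hS₀.trans (Finset.coe_image).symm)
      · rw [hFeq, ← hNg, hSab]
        ext x
        simp only [Set.mem_setOf_eq, AffineSubspace.mem_inf_iff,
          Submodule.mem_toAffineSubspace, LinearMap.mem_ker]
        tauto
      · rw [LinearMap.coe_toAffineMap]
        exact himage
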